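/- arXiv:2003.10054 — 4 statements merged into one kernel-verified Lean document; each statement's English description precedes it below -/
import Mathlib

section
/- Let n be a positive integer, let φ : ℝ → Matrix (Fin n) (Fin n) ℂ be continuous with φ(t) skew-Hermitian for every t, and let g : ℝ → Matrix (Fin n) (Fin n) ℂ be differentiable with derivative satisfying g′(t) = −g(t) · φ(t) for all t. If g(0) is unitary (g(0) · g(0)ᴴ = 1 and g(0)ᴴ · g(0) = 1), then g(t) is unitary for every t ∈ ℝ. -/
open Matrix

attribute [local instance] Matrix.normedAddCommGroup Matrix.normedSpace

/-- If φ is continuous with skew-Hermitian values, g is differentiable with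
g′(t) = −g(t)·φ(t), and g(0) is unitary, then g(t) is unitary for all t. -/
theorem gauge_transformation_unitary (n : ℕ) (hn : 0 < n)
    (φ g : ℝ → Matrix (Fin n) (Fin n) ℂ)
    (hφcont : Continuous φ) (hφ : ∀ t, (φ t)ᴴ = -(φ t))
    (hdiff : Differentiable ℝ g)
    (hderiv : ∀ t, deriv g t = -(g t * φ t))
    (hg0 : g 0 * (g 0)ᴴ = 1 ∧ (g 0)ᴴ * g 0 = 1) :
    ∀ t : ℝ, g t * (g t)ᴴ = 1 ∧ (g t)ᴴ * g t = 1 := by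
  -- conjugate transpose as a continuous ℝ-linear map
  let S₀ : Matrix (Fin n) (Fin n) ℂ →ₗ[ℝ] Matrix (Fin n) (Fin n) ℂ :=
    { toFun := fun A => Aᴴ
      map_add' := fun A B => Matrix.conjTranspose_add A B
      map_smul' := fun r A => by
        show (r • A)ᴴ = (RingHom.id ℝ) r • Aᴴ
        rw [Matrix.conjTranspose_smul, star_trivial, RingHom.id_apply] }
  let S : Matrix (Fin n) (Fin n) ℂ →L[ℝ] Matrix (Fin n) (Fin n) ℂ :=
    S₀.toContinuousLinearMap
  have hSapp : ∀ A : Matrix (Fin n) (Fin n) ℂ, S A = Aᴴ := fun A => rfl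
  -- multiplication as a continuous bilinear map
  let B₁ : Matrix (Fin n) (Fin n) ℂ →ₗ[ℝ]
      (Matrix (Fin n) (Fin n) ℂ →L[ℝ] Matrix (Fin n) (Fin n) ℂ) :=
    { toFun := fun A => ((LinearMap.mul ℝ (Matrix (Fin n) (Fin n) ℂ)) A).toContinuousLinearMap
      map_add' := by
        intro A A'
        ext C
        simp [add_mul]
      map_smul' := by
        intro r A
        ext C
        simp }
  let B := B₁.toContinuousLinearMap
  have hBapp : ∀ A C : Matrix (Fin n) (Fin n) ℂ, B A C = A * C := fun A C => rfl
  have hS : ∀ t, HasDerivAt (fun s => (g s)ᴴ) (deriv g t)ᴴ t := by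
    intro t
    have h1 : HasDerivAt g (deriv g t) t := (hdiff t).hasDerivAt
    have := S.hasFDerivAt.comp_hasDerivAt t h1
    exact this
  have hmul : ∀ t, HasDerivAt (fun s => g s * (g s)ᴴ)
      (deriv g t * (g t)ᴴ + g t * (deriv g t)ᴴ) t := by
    intro t
    have h1 : HasDerivAt g (deriv g t) t := (hdiff t).hasDerivAt
    letI : NormedAddCommGroup (Matrix (Fin n) (Fin n) ℂ →L[ℝ] Matrix (Fin n) (Fin n) ℂ) :=
      ContinuousLinearMap.toNormedAddCommGroup
    letI : NormedSpace ℝ (Matrix (Fin n) (Fin n) ℂ →L[ℝ] Matrix (Fin n) (Fin n) ℂ) :=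
      ContinuousLinearMap.toNormedSpace
    have h3 : HasDerivAt (fun s => B (g s)) (B (deriv g t)) t :=
      B.hasFDerivAt.comp_hasDerivAt t h1
    have := h3.clm_apply (hS t)
    exact this
  have hzero : ∀ t, HasDerivAt (fun s => g s * (g s)ᴴ) 0 t := by
    intro t
    have h := hmul t
    rw [hderiv t] at h
    convert h using 1
    rw [Matrix.conjTranspose_neg, Matrix.conjTranspose_mul, hφ t]
    simp [Matrix.mul_assoc]
  have hdiffh : Differentiable ℝ (fun s => g s * (g s)ᴴ) :=
    fun t => (hzero t).differentiableAt
  have hderivh : ∀ t, deriv (fun s => g s * (g s)ᴴ) t = 0 :=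
    fun t => (hzero t).deriv
  have hconst : ∀ t : ℝ, g t * (g t)ᴴ = g 0 * (g 0)ᴴ := by
    intro t
    exact is_const_of_deriv_eq_zero hdiffh hderivh t 0
  intro t
  have h1 : g t * (g t)ᴴ = 1 := by rw [hconst t, hg0.1]
  exact ⟨h1, mul_eq_one_comm.mp h1⟩
end

section
/- Let V be a finite-dimensional real vector space, g a real Lie algebra, and k, l, p natural numbers. For every alternating k-linear map u, alternating l-linear map v, and alternating p-linear map w from V to g, the graded Jacobi identity [[u ∧ v] ∧ w] + (−1)^{kl} [v ∧ [u ∧ w]] = [u ∧ [v ∧ w]] holds as an equality of alternating (k+l+p)-linear maps from V to g, with all index types identified with Fin (k+l+p) along the canonical equivalences. -/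
open scoped TensorProduct

/-- The bilinear map `g -> g -> g` given by the Lie bracket. -/
noncomputable def bracketBilin (g : Type*) [LieRing g] [LieAlgebra ℝ g] :
    g →ₗ[ℝ] g →ₗ[ℝ] g :=
  LinearMap.mk₂ ℝ (fun ξ η : g => ⁅ξ, η⁆)
    (fun _ _ _ => add_lie _ _ _)
    (fun _ _ _ => smul_lie _ _ _)
    (fun _ _ _ => lie_add _ _ _)
    (fun _ _ _ => lie_smul _ _ _)

/-- The bracket-wedge `[u ∧ v]` of Lie algebra-valued alternating forms, obtained by
composing the linear map induced by the Lie bracket with the domain coproduct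
`u.domCoprod v`, reindexed from `Fin k ⊕ Fin l` to `Fin (k + l)` along the canonical
equivalence. -/
noncomputable def bwedge {V g : Type*} [AddCommGroup V] [Module ℝ V]
    [LieRing g] [LieAlgebra ℝ g] {k l : ℕ}
    (u : AlternatingMap ℝ V g (Fin k)) (v : AlternatingMap ℝ V g (Fin l)) :
    AlternatingMap ℝ V g (Fin (k + l)) :=
  ((TensorProduct.lift (bracketBilin g)).compAlternatingMap
    (u.domCoprod v)).domDomCongr finSumFinEquiv

section Aux

variable {M N : Type*} [AddCommGroup M] [Module ℝ M] [AddCommGroup N] [Module ℝ N]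
variable {ι κ : Type*} [DecidableEq ι] [Fintype ι] [DecidableEq κ] [Fintype κ]

theorem alternatization_domDomCongr (e : ι ≃ κ) (f : MultilinearMap ℝ (fun _ : ι => M) N) :
    MultilinearMap.alternatization (f.domDomCongr e) =
      (MultilinearMap.alternatization f).domDomCongr e := by
  apply AlternatingMap.ext
  intro v
  rw [MultilinearMap.alternatization_apply]
  have hR : (MultilinearMap.alternatization f).domDomCongr e v =
      MultilinearMap.alternatization f (fun i => v (e i)) := rfl
  rw [hR, MultilinearMap.alternatization_apply]
  rw [← Equiv.sum_comp (Equiv.permCongr e)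
    (fun σ => Equiv.Perm.sign σ • (f.domDomCongr e).domDomCongr σ v)]
  refine Finset.sum_congr rfl (fun τ _ => ?_)
  rw [Equiv.Perm.sign_permCongr]
  congr 1
  simp only [MultilinearMap.domDomCongr_apply]
  congr 1
  funext i
  simp [Equiv.permCongr_apply]

theorem alternatization_smul (c : ℝ) (f : MultilinearMap ℝ (fun _ : ι => M) N) :
    MultilinearMap.alternatization (c • f) = c • MultilinearMap.alternatization f := by
  apply AlternatingMap.ext
  intro v
  rw [MultilinearMap.alternatization_apply, AlternatingMap.smul_apply,
    MultilinearMap.alternatization_apply, Finset.smul_sum]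
  refine Finset.sum_congr rfl (fun σ _ => ?_)
  rw [smul_comm]
  congr 1

variable {V g : Type*} [AddCommGroup V] [Module ℝ V] [LieRing g] [LieAlgebra ℝ g]
variable {ι κ : Type*}

noncomputable def mB (a : MultilinearMap ℝ (fun _ : ι => V) g)
    (b : MultilinearMap ℝ (fun _ : κ => V) g) :
    MultilinearMap ℝ (fun _ : ι ⊕ κ => V) g :=
  (TensorProduct.lift (bracketBilin g)).compMultilinearMap (a.domCoprod b)

theorem mB_apply (a : MultilinearMap ℝ (fun _ : ι => V) g)
    (b : MultilinearMap ℝ (fun _ : κ => V) g) (x : ι ⊕ κ → V) :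
    mB a b x = ⁅a (fun i => x (Sum.inl i)), b (fun i => x (Sum.inr i))⁆ := rfl

theorem mB_smul_left (c : ℝ) (a : MultilinearMap ℝ (fun _ : ι => V) g)
    (b : MultilinearMap ℝ (fun _ : κ => V) g) :
    mB (c • a) b = c • mB a b := by
  apply MultilinearMap.ext; intro x
  simp [mB_apply, smul_lie]

theorem mB_smul_right (c : ℝ) (a : MultilinearMap ℝ (fun _ : ι => V) g)
    (b : MultilinearMap ℝ (fun _ : κ => V) g) :
    mB a (c • b) = c • mB a b := by
  apply MultilinearMap.ext; intro x
  simp [mB_apply, lie_smul]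

theorem mB_domDomCongr_left {ι' : Type*} (e : ι ≃ ι')
    (a : MultilinearMap ℝ (fun _ : ι => V) g) (b : MultilinearMap ℝ (fun _ : κ => V) g) :
    mB (a.domDomCongr e) b = (mB a b).domDomCongr (e.sumCongr (Equiv.refl κ)) := by
  apply MultilinearMap.ext; intro x
  rfl

theorem mB_domDomCongr_right {κ' : Type*} (e : κ ≃ κ')
    (a : MultilinearMap ℝ (fun _ : ι => V) g) (b : MultilinearMap ℝ (fun _ : κ => V) g) :
    mB a (b.domDomCongr e) = (mB a b).domDomCongr ((Equiv.refl ι).sumCongr e) := by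
  apply MultilinearMap.ext; intro x
  rfl

variable [DecidableEq ι] [Fintype ι] [DecidableEq κ] [Fintype κ]

/-- `f ↦ alternatization (mB f b)` as an `AddMonoidHom`. -/
noncomputable def PhiL (b : MultilinearMap ℝ (fun _ : κ => V) g) :
    MultilinearMap ℝ (fun _ : ι => V) g →+ AlternatingMap ℝ V g (ι ⊕ κ) where
  toFun a := MultilinearMap.alternatization (mB a b)
  map_zero' := by
    have : mB (0 : MultilinearMap ℝ (fun _ : ι => V) g) b = 0 := by
      apply MultilinearMap.ext; intro x; simp [mB_apply]
    rw [this, map_zero]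
  map_add' a a' := by
    have : mB (a + a') b = mB a b + mB a' b := by
      apply MultilinearMap.ext; intro x; simp [mB_apply, add_lie]
    rw [this, map_add]

noncomputable def PhiR (a : MultilinearMap ℝ (fun _ : ι => V) g) :
    MultilinearMap ℝ (fun _ : κ => V) g →+ AlternatingMap ℝ V g (ι ⊕ κ) where
  toFun b := MultilinearMap.alternatization (mB a b)
  map_zero' := by
    have : mB a (0 : MultilinearMap ℝ (fun _ : κ => V) g) = 0 := by
      apply MultilinearMap.ext; intro x; simp [mB_apply]
    rw [this, map_zero]
  map_add' b b' := by
    have : mB a (b + b') = mB a b + mB a b' := by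
      apply MultilinearMap.ext; intro x; simp [mB_apply, lie_add]
    rw [this, map_add]

theorem absorb_left (f : MultilinearMap ℝ (fun _ : ι => V) g)
    (b : MultilinearMap ℝ (fun _ : κ => V) g) :
    MultilinearMap.alternatization
        (mB (↑(MultilinearMap.alternatization f) : MultilinearMap ℝ (fun _ : ι => V) g) b) =
      (Fintype.card ι).factorial • MultilinearMap.alternatization (mB f b) := by
  have hcoe := MultilinearMap.alternatization_coe f
  rw [hcoe]
  have hPhi : ∀ (h : MultilinearMap ℝ (fun _ : ι => V) g),
      MultilinearMap.alternatization (mB h b) = PhiL b h := fun _ => rfl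
  rw [hPhi, map_sum (PhiL b)]
  have hterm : ∀ σ : Equiv.Perm ι,
      PhiL b (Equiv.Perm.sign σ • f.domDomCongr σ) =
        MultilinearMap.alternatization (mB f b) := by
    intro σ
    rw [Units.smul_def, AddMonoidHom.map_zsmul]
    rw [← hPhi, mB_domDomCongr_left, alternatization_domDomCongr,
      AlternatingMap.domDomCongr_perm, Equiv.Perm.sign_sumCongr, Equiv.Perm.sign_refl, mul_one]
    rw [Units.smul_def, smul_smul]
    have h1 : ((Equiv.Perm.sign σ : ℤ)) * ((Equiv.Perm.sign σ : ℤ)) = 1 := by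
      rw [← Units.val_mul, Int.units_mul_self, Units.val_one]
    rw [h1, one_smul]
  rw [Finset.sum_congr rfl (fun σ _ => hterm σ), Finset.sum_const, Finset.card_univ,
    Fintype.card_perm]

theorem absorb_right (a : MultilinearMap ℝ (fun _ : ι => V) g)
    (f : MultilinearMap ℝ (fun _ : κ => V) g) :
    MultilinearMap.alternatization
        (mB a (↑(MultilinearMap.alternatization f) : MultilinearMap ℝ (fun _ : κ => V) g)) =
      (Fintype.card κ).factorial • MultilinearMap.alternatization (mB a f) := by
  have hcoe := MultilinearMap.alternatization_coe f
  rw [hcoe]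
  have hPhi : ∀ (h : MultilinearMap ℝ (fun _ : κ => V) g),
      MultilinearMap.alternatization (mB a h) = PhiR a h := fun _ => rfl
  rw [hPhi, map_sum (PhiR a)]
  have hterm : ∀ σ : Equiv.Perm κ,
      PhiR a (Equiv.Perm.sign σ • f.domDomCongr σ) =
        MultilinearMap.alternatization (mB a f) := by
    intro σ
    rw [Units.smul_def, AddMonoidHom.map_zsmul]
    rw [← hPhi, mB_domDomCongr_right, alternatization_domDomCongr,
      AlternatingMap.domDomCongr_perm, Equiv.Perm.sign_sumCongr, Equiv.Perm.sign_refl, one_mul]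
    rw [Units.smul_def, smul_smul]
    have h1 : ((Equiv.Perm.sign σ : ℤ)) * ((Equiv.Perm.sign σ : ℤ)) = 1 := by
      rw [← Units.val_mul, Int.units_mul_self, Units.val_one]
    rw [h1, one_smul]
  rw [Finset.sum_congr rfl (fun σ _ => hterm σ), Finset.sum_const, Finset.card_univ,
    Fintype.card_perm]


open Fin.NatCast in
theorem finRotate_pow_apply (M : ℕ) [NeZero M] (j : ℕ) (i : Fin M) :
    ((finRotate M) ^ j) i = i + (j : Fin M) := by
  obtain ⟨N, rfl⟩ : ∃ N, M = N + 1 := ⟨M - 1, by have := NeZero.ne M; omega⟩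
  induction j with
  | zero => simp
  | succ t ih =>
    rw [pow_succ', Equiv.Perm.mul_apply, finRotate_succ_apply, Nat.cast_add, Nat.cast_one]
    rw [ih]
    exact add_assoc _ _ _

theorem sign_blockSwap (m n : ℕ) :
    Equiv.Perm.sign ((finAddFlip.trans (finCongr (Nat.add_comm n m))) : Equiv.Perm (Fin (m+n))) =
      (-1 : ℤˣ) ^ (m*n) := by
  rcases Nat.eq_zero_or_pos (m+n) with h | h
  · have hm : m = 0 := by omega
    subst hm
    simp only [Nat.zero_add] at h ⊢
    subst h
    have : ((finAddFlip.trans (finCongr (Nat.add_comm 0 0))) : Equiv.Perm (Fin 0)) = 1 := by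
      apply Equiv.ext; intro x; exact x.elim0
    rw [this]; simp
  · haveI : NeZero (m+n) := ⟨by omega⟩
    have key : ((finAddFlip.trans (finCongr (Nat.add_comm n m))) : Equiv.Perm (Fin (m+n))) =
        (finRotate (m+n)) ^ n := by
      apply Equiv.ext
      intro x
      rw [finRotate_pow_apply]
      apply Fin.ext
      rw [Fin.add_def, Fin.val_natCast]
      obtain ⟨xv, hxv⟩ := x
      rcases lt_or_ge xv m with hx | hx
      · rw [Equiv.trans_apply]
        rw [finAddFlip_apply_mk_left hx]
        simp only [finCongr_apply, Fin.coe_cast]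
        rcases Nat.eq_zero_or_pos m with hm | hm
        · omega
        · have hnm : n % (m+n) = n := Nat.mod_eq_of_lt (by omega)
          rw [hnm, Nat.mod_eq_of_lt (by omega)]
          omega
      · rw [Equiv.trans_apply]
        rw [finAddFlip_apply_mk_right hx hxv]
        simp only [finCongr_apply, Fin.coe_cast]
        rcases Nat.eq_zero_or_pos m with hm | hm
        · subst hm
          have h0 : n % (0+n) = 0 := by simp
          rw [h0]
          simp only [Fin.val_mk, Nat.add_zero, Nat.sub_zero]
          rw [Nat.mod_eq_of_lt (by omega)]
        · have hnm : n % (m+n) = n := Nat.mod_eq_of_lt (by omega)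
          rw [hnm]
          have : (xv + n) % (m+n) = xv + n - (m+n) := by
            rw [Nat.mod_eq_sub_mod (by omega), Nat.mod_eq_of_lt (by omega)]
          omega
    rw [key, map_pow]
    obtain ⟨N, hN⟩ : ∃ N, m + n = N + 1 := ⟨m+n-1, by omega⟩
    rw [hN, sign_finRotate, ← pow_mul]
    rcases Nat.eq_zero_or_pos n with hn | hn
    · subst hn; simp
    · have hNn : N * n = m * n + n * (n-1) := by
        have hNm : N = m + (n - 1) := by omega
        subst hNm
        obtain ⟨t, rfl⟩ : ∃ t, n = t + 1 := ⟨n-1, by omega⟩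
        simp only [Nat.add_sub_cancel]
        ring
      rw [Nat.add_sub_cancel, hNn, pow_add]
      have hev : Even (n * (n-1)) := by
        rcases Nat.even_or_odd n with he | ho
        · exact he.mul_right _
        · exact (Nat.Odd.sub_odd ho odd_one).mul_left _
      rw [hev.neg_one_pow, mul_one]

theorem compAlternatingMap_nsmul {ιz : Type*} (L : (g ⊗[ℝ] g) →ₗ[ℝ] g) (n : ℕ)
    (X : AlternatingMap ℝ V (g ⊗[ℝ] g) ιz) :
    L.compAlternatingMap (n • X) = n • L.compAlternatingMap X := by
  apply AlternatingMap.ext; intro x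
  simp


theorem bwedge_eq {k l : ℕ}
    (a : AlternatingMap ℝ V g (Fin k)) (b : AlternatingMap ℝ V g (Fin l)) :
    bwedge a b = (((k.factorial * l.factorial : ℕ) : ℝ))⁻¹ •
      (MultilinearMap.alternatization
        (mB (↑a : MultilinearMap ℝ (fun _ : Fin k => V) g) ↑b)).domDomCongr
        finSumFinEquiv := by
  have hne : ((k.factorial * l.factorial : ℕ) : ℝ) ≠ 0 :=
    Nat.cast_ne_zero.mpr (Nat.mul_ne_zero k.factorial_ne_zero l.factorial_ne_zero)
  rw [eq_comm, inv_smul_eq_iff₀ hne]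
  have h1 : MultilinearMap.alternatization
        (mB (↑a : MultilinearMap ℝ (fun _ : Fin k => V) g) ↑b) =
      (k.factorial * l.factorial) •
        ((TensorProduct.lift (bracketBilin g)).compAlternatingMap (a.domCoprod b)) := by
    have h0 : mB (↑a : MultilinearMap ℝ (fun _ : Fin k => V) g) ↑b =
        (TensorProduct.lift (bracketBilin g)).compMultilinearMap
          (MultilinearMap.domCoprod
            (a : MultilinearMap ℝ (fun _ : Fin k => V) g)
            (b : MultilinearMap ℝ (fun _ : Fin l => V) g)) := rfl
    rw [h0, LinearMap.compMultilinearMap_alternatization,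
      MultilinearMap.domCoprod_alternization_eq]
    simp only [Fintype.card_fin]
    rw [compAlternatingMap_nsmul]
  rw [h1, AlternatingMap.domDomCongr_smul, Nat.cast_smul_eq_nsmul]
  rfl

end Aux

/-- The graded Jacobi identity:
`[[u ∧ v] ∧ w] + (-1)^(k*l) [v ∧ [u ∧ w]] = [u ∧ [v ∧ w]]`, with all index types
identified with `Fin (k + l + p)` along the canonical equivalences. -/
theorem bwedge_graded_jacobi {V g : Type*} [AddCommGroup V] [Module ℝ V]
    [FiniteDimensional ℝ V] [LieRing g] [LieAlgebra ℝ g] {k l p : ℕ}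
    (u : AlternatingMap ℝ V g (Fin k)) (v : AlternatingMap ℝ V g (Fin l))
    (w : AlternatingMap ℝ V g (Fin p)) :
    bwedge (bwedge u v) w +
      ((-1 : ℝ) ^ (k * l)) •
        ((bwedge v (bwedge u w)).domDomCongr
          (finCongr (by omega : l + (k + p) = k + l + p))) =
    (bwedge u (bwedge v w)).domDomCongr
      (finCongr (by omega : k + (l + p) = k + l + p)) := by
  classical
  have hb : l + (k + p) = k + l + p := by omega
  have hc : k + (l + p) = k + l + p := by omega
  -- common equivalences
  set sA : (Fin k ⊕ Fin l) ⊕ Fin p ≃ Fin k ⊕ (Fin l ⊕ Fin p) :=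
    Equiv.sumAssoc (Fin k) (Fin l) (Fin p) with hsA
  set sB : Fin l ⊕ (Fin k ⊕ Fin p) ≃ Fin k ⊕ (Fin l ⊕ Fin p) :=
    ((Equiv.sumAssoc (Fin l) (Fin k) (Fin p)).symm.trans
      (((Equiv.sumComm (Fin l) (Fin k)).sumCongr (Equiv.refl (Fin p))).trans
        (Equiv.sumAssoc (Fin k) (Fin l) (Fin p)))) with hsB
  set ea : (Fin k ⊕ Fin l) ⊕ Fin p ≃ Fin (k + l + p) :=
    (finSumFinEquiv.sumCongr (Equiv.refl (Fin p))).trans finSumFinEquiv with hea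
  set ec : Fin k ⊕ (Fin l ⊕ Fin p) ≃ Fin (k + l + p) :=
    (((Equiv.refl (Fin k)).sumCongr finSumFinEquiv).trans finSumFinEquiv).trans
      (finCongr hc) with hec
  set eb : Fin l ⊕ (Fin k ⊕ Fin p) ≃ Fin (k + l + p) :=
    (((Equiv.refl (Fin l)).sumCongr finSumFinEquiv).trans finSumFinEquiv).trans
      (finCongr hb) with heb
  set π₀ : Equiv.Perm (Fin (k + l)) :=
    (finAddFlip.trans (finCongr (Nat.add_comm l k))) with hπ₀
  set π : Equiv.Perm (Fin (k + l + p)) :=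
    Equiv.permCongr (finSumFinEquiv : Fin (k+l) ⊕ Fin p ≃ Fin (k+l+p))
      (π₀.sumCongr (Equiv.refl (Fin p))) with hπ
  -- value computations
  have π₀_val : ∀ y : Fin (k + l), ((π₀ y : Fin (k+l)) : ℕ) =
      if (y : ℕ) < k then l + (y : ℕ) else (y : ℕ) - k := by
    intro y
    obtain ⟨yv, hyv⟩ := y
    by_cases hy : yv < k
    · rw [if_pos hy, hπ₀, Equiv.trans_apply, finAddFlip_apply_mk_left hy]
      simp
    · rw [if_neg hy, hπ₀, Equiv.trans_apply, finAddFlip_apply_mk_right (by omega) hyv]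
      simp
  have π_val : ∀ x : Fin (k + l + p), ((π x : Fin (k+l+p)) : ℕ) =
      if h : (x : ℕ) < k + l then ((π₀ ⟨(x : ℕ), h⟩ : Fin (k+l)) : ℕ) else (x : ℕ) := by
    intro x
    by_cases hx : (x : ℕ) < k + l
    · rw [dif_pos hx]
      have hx2 : x = finSumFinEquiv (Sum.inl (⟨(x:ℕ), hx⟩ : Fin (k+l))) := by
        apply Fin.ext; simp
      conv_lhs => rw [hx2]
      rw [hπ, Equiv.permCongr_apply, Equiv.symm_apply_apply]
      simp
    · rw [dif_neg hx]
      have hx2 : x = finSumFinEquiv (Sum.inr (⟨(x:ℕ) - (k+l), by omega⟩ : Fin p)) := by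
        apply Fin.ext; simp; omega
      conv_lhs => rw [hx2]
      rw [hπ, Equiv.permCongr_apply, Equiv.symm_apply_apply]
      simp
      try omega
  -- sign of π
  have hsignπ : Equiv.Perm.sign π = (-1 : ℤˣ) ^ (k * l) := by
    rw [hπ, Equiv.Perm.sign_permCongr, Equiv.Perm.sign_sumCongr, Equiv.Perm.sign_refl, mul_one,
      hπ₀, sign_blockSwap]
  -- equivalence identities
  have EA : ea = sA.trans ec := by
    apply Equiv.ext
    rintro ((i | j) | c) <;>
      (apply Fin.ext; simp [hea, hsA, hec]; try omega)
  have EB : eb = sB.trans (ec.trans π) := by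
    apply Equiv.ext
    rintro (j | (i | c)) <;> apply Fin.ext
    · have hv : ((ec (sB (Sum.inl j)) : Fin (k+l+p)) : ℕ) = k + (j : ℕ) := by
        simp [hsB, hec]
      have hL : ((eb (Sum.inl j) : Fin (k+l+p)) : ℕ) = (j : ℕ) := by simp [heb]
      simp only [Equiv.trans_apply]
      rw [hL, π_val]
      simp only [hv]
      rw [dif_pos (show k + (j:ℕ) < k + l by omega), π₀_val]
      simp only [Fin.val_mk]
      rw [if_neg (by omega : ¬ (k + (j:ℕ) < k))]
      omega
    · have hv : ((ec (sB (Sum.inr (Sum.inl i))) : Fin (k+l+p)) : ℕ) = (i : ℕ) := by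
        simp [hsB, hec]
      have hL : ((eb (Sum.inr (Sum.inl i)) : Fin (k+l+p)) : ℕ) = l + (i : ℕ) := by
        simp [heb]
      simp only [Equiv.trans_apply]
      rw [hL, π_val]
      simp only [hv]
      rw [dif_pos (show (i:ℕ) < k + l by omega), π₀_val]
      simp only [Fin.val_mk]
      rw [if_pos (by omega : ((i:ℕ) < k))]
    · have hv : ((ec (sB (Sum.inr (Sum.inr c))) : Fin (k+l+p)) : ℕ) = k + (l + (c : ℕ)) := by
        simp [hsB, hec]
      have hL : ((eb (Sum.inr (Sum.inr c)) : Fin (k+l+p)) : ℕ) = l + (k + (c : ℕ)) := by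
        simp [heb]
      simp only [Equiv.trans_apply]
      rw [hL, π_val]
      simp only [hv]
      rw [dif_neg (by omega)]
      omega
  -- Step 2: express each term via alternatizations of iterated-bracket multilinear maps
  have h2 : (↑(bwedge u v) : MultilinearMap ℝ (fun _ : Fin (k+l) => V) g) =
      (((k.factorial * l.factorial : ℕ)) : ℝ)⁻¹ •
        ((↑(MultilinearMap.alternatization
            (mB u.toMultilinearMap v.toMultilinearMap)) :
          MultilinearMap ℝ (fun _ : Fin k ⊕ Fin l => V) g).domDomCongr finSumFinEquiv) := by
    rw [bwedge_eq u v]; rfl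
  have h3 : (↑(bwedge v w) : MultilinearMap ℝ (fun _ : Fin (l+p) => V) g) =
      (((l.factorial * p.factorial : ℕ)) : ℝ)⁻¹ •
        ((↑(MultilinearMap.alternatization
            (mB v.toMultilinearMap w.toMultilinearMap)) :
          MultilinearMap ℝ (fun _ : Fin l ⊕ Fin p => V) g).domDomCongr finSumFinEquiv) := by
    rw [bwedge_eq v w]; rfl
  have h4 : (↑(bwedge u w) : MultilinearMap ℝ (fun _ : Fin (k+p) => V) g) =
      (((k.factorial * p.factorial : ℕ)) : ℝ)⁻¹ •
        ((↑(MultilinearMap.alternatization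
            (mB u.toMultilinearMap w.toMultilinearMap)) :
          MultilinearMap ℝ (fun _ : Fin k ⊕ Fin p => V) g).domDomCongr finSumFinEquiv) := by
    rw [bwedge_eq u w]; rfl
  have H1 : bwedge (bwedge u v) w =
      (((k.factorial * l.factorial * p.factorial : ℕ)) : ℝ)⁻¹ •
        ((MultilinearMap.alternatization
          (mB (mB u.toMultilinearMap v.toMultilinearMap) w.toMultilinearMap)).domDomCongr ea) := by
    rw [bwedge_eq (bwedge u v) w, h2, mB_smul_left, alternatization_smul,
      mB_domDomCongr_left, alternatization_domDomCongr, absorb_left]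
    simp only [Fintype.card_sum, Fintype.card_fin]
    simp only [AlternatingMap.domDomCongr_smul]
    simp only [← AlternatingMap.domDomCongr_trans]
    rw [← hea, ← Nat.cast_smul_eq_nsmul ℝ, smul_smul, smul_smul]
    congr 1
    have c1 : ((k+l).factorial : ℝ) ≠ 0 := Nat.cast_ne_zero.mpr (k+l).factorial_ne_zero
    have c2 : (k.factorial : ℝ) ≠ 0 := Nat.cast_ne_zero.mpr k.factorial_ne_zero
    have c3 : (l.factorial : ℝ) ≠ 0 := Nat.cast_ne_zero.mpr l.factorial_ne_zero
    have c4 : (p.factorial : ℝ) ≠ 0 := Nat.cast_ne_zero.mpr p.factorial_ne_zero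
    push_cast
    field_simp
  have H3 : (bwedge u (bwedge v w)).domDomCongr (finCongr hc) =
      (((k.factorial * l.factorial * p.factorial : ℕ)) : ℝ)⁻¹ •
        ((MultilinearMap.alternatization
          (mB u.toMultilinearMap
            (mB v.toMultilinearMap w.toMultilinearMap))).domDomCongr ec) := by
    rw [bwedge_eq u (bwedge v w), h3, mB_smul_right, alternatization_smul,
      mB_domDomCongr_right, alternatization_domDomCongr, absorb_right]
    simp only [Fintype.card_sum, Fintype.card_fin]
    simp only [AlternatingMap.domDomCongr_smul]
    simp only [← AlternatingMap.domDomCongr_trans]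
    rw [← hec, ← Nat.cast_smul_eq_nsmul ℝ, smul_smul, smul_smul]
    congr 1
    have c1 : ((l+p).factorial : ℝ) ≠ 0 := Nat.cast_ne_zero.mpr (l+p).factorial_ne_zero
    have c2 : (k.factorial : ℝ) ≠ 0 := Nat.cast_ne_zero.mpr k.factorial_ne_zero
    have c3 : (l.factorial : ℝ) ≠ 0 := Nat.cast_ne_zero.mpr l.factorial_ne_zero
    have c4 : (p.factorial : ℝ) ≠ 0 := Nat.cast_ne_zero.mpr p.factorial_ne_zero
    push_cast
    field_simp
  have H2 : (bwedge v (bwedge u w)).domDomCongr (finCongr hb) =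
      (((k.factorial * l.factorial * p.factorial : ℕ)) : ℝ)⁻¹ •
        ((MultilinearMap.alternatization
          (mB v.toMultilinearMap
            (mB u.toMultilinearMap w.toMultilinearMap))).domDomCongr eb) := by
    rw [bwedge_eq v (bwedge u w), h4, mB_smul_right, alternatization_smul,
      mB_domDomCongr_right, alternatization_domDomCongr, absorb_right]
    simp only [Fintype.card_sum, Fintype.card_fin]
    simp only [AlternatingMap.domDomCongr_smul]
    simp only [← AlternatingMap.domDomCongr_trans]
    rw [← heb, ← Nat.cast_smul_eq_nsmul ℝ, smul_smul, smul_smul]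
    congr 1
    have c1 : ((k+p).factorial : ℝ) ≠ 0 := Nat.cast_ne_zero.mpr (k+p).factorial_ne_zero
    have c2 : (k.factorial : ℝ) ≠ 0 := Nat.cast_ne_zero.mpr k.factorial_ne_zero
    have c3 : (l.factorial : ℝ) ≠ 0 := Nat.cast_ne_zero.mpr l.factorial_ne_zero
    have c4 : (p.factorial : ℝ) ≠ 0 := Nat.cast_ne_zero.mpr p.factorial_ne_zero
    push_cast
    field_simp
  -- Step 3: transport to the common index type
  have P1 : (MultilinearMap.alternatization
        (mB (mB u.toMultilinearMap v.toMultilinearMap) w.toMultilinearMap)).domDomCongr ea =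
      (MultilinearMap.alternatization
        ((mB (mB u.toMultilinearMap v.toMultilinearMap) w.toMultilinearMap).domDomCongr
          sA)).domDomCongr ec := by
    rw [alternatization_domDomCongr, ← AlternatingMap.domDomCongr_trans, ← EA]
  have P2 : (MultilinearMap.alternatization
        (mB v.toMultilinearMap
          (mB u.toMultilinearMap w.toMultilinearMap))).domDomCongr eb =
      ((-1 : ℤˣ) ^ (k*l)) • (MultilinearMap.alternatization
        ((mB v.toMultilinearMap
          (mB u.toMultilinearMap w.toMultilinearMap)).domDomCongr
          sB)).domDomCongr ec := by
    rw [alternatization_domDomCongr, ← AlternatingMap.domDomCongr_trans, EB,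
      ← Equiv.trans_assoc, AlternatingMap.domDomCongr_trans, AlternatingMap.domDomCongr_perm,
      hsignπ]
  -- Step 4: combine
  rw [H1, H2, H3, P1, P2]
  have hsgn : ∀ X : AlternatingMap ℝ V g (Fin (k + l + p)),
      ((-1 : ℝ) ^ (k*l)) •
        ((((k.factorial * l.factorial * p.factorial : ℕ)) : ℝ)⁻¹ •
          (((-1 : ℤˣ) ^ (k*l)) • X)) =
      (((k.factorial * l.factorial * p.factorial : ℕ)) : ℝ)⁻¹ • X := by
    intro X
    rw [Units.smul_def]
    have hval : (((-1 : ℤˣ) ^ (k*l) : ℤˣ) : ℤ) = (-1 : ℤ) ^ (k*l) := by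
      simp
    rw [hval, ← Int.cast_smul_eq_zsmul ℝ]
    have hcast : (((-1 : ℤ) ^ (k*l) : ℤ) : ℝ) = (-1 : ℝ) ^ (k*l) := by
      push_cast
      ring
    rw [hcast, smul_smul, smul_smul]
    congr 1
    have hone : ((-1 : ℝ)) ^ (k*l) * ((-1 : ℝ)) ^ (k*l) = 1 := by
      rw [← pow_add]
      exact Even.neg_one_pow ⟨k*l, rfl⟩
    calc ((-1 : ℝ)) ^ (k*l) * (((k.factorial * l.factorial * p.factorial : ℕ)) : ℝ)⁻¹ *
          ((-1 : ℝ)) ^ (k*l)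
        = (((k.factorial * l.factorial * p.factorial : ℕ)) : ℝ)⁻¹ *
            (((-1 : ℝ)) ^ (k*l) * ((-1 : ℝ)) ^ (k*l)) := by ring
      _ = _ := by rw [hone, mul_one]
  rw [hsgn, ← smul_add, ← AlternatingMap.domDomCongr_add, ← map_add]
  have hT : (mB (mB u.toMultilinearMap v.toMultilinearMap) w.toMultilinearMap).domDomCongr sA +
      (mB v.toMultilinearMap (mB u.toMultilinearMap w.toMultilinearMap)).domDomCongr sB =
      mB u.toMultilinearMap (mB v.toMultilinearMap w.toMultilinearMap) := by
    apply MultilinearMap.ext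
    intro x
    simp only [MultilinearMap.add_apply, MultilinearMap.domDomCongr_apply, mB_apply, hsA, hsB,
      Equiv.sumAssoc_apply_inl_inl, Equiv.sumAssoc_apply_inl_inr, Equiv.sumAssoc_apply_inr,
      Equiv.trans_apply, Equiv.sumCongr_apply, Equiv.sumComm_apply, Equiv.sumAssoc_symm_apply_inl,
      Equiv.sumAssoc_symm_apply_inr_inl, Equiv.sumAssoc_symm_apply_inr_inr, Sum.map_inl,
      Sum.map_inr, Equiv.coe_refl, id_eq, Sum.swap_inl, Sum.swap_inr, Sum.elim_inl, Sum.elim_inr]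
    rw [lie_lie]
    change _ - _ + ⁅v.toMultilinearMap (fun i => x (Sum.inr (Sum.inl i))),
      ⁅u.toMultilinearMap (fun i => x (Sum.inl i)),
        w.toMultilinearMap (fun i => x (Sum.inr (Sum.inr i)))⁆⁆ = _
    abel
  rw [hT]
end

section
/- Let V be a finite-dimensional real vector space and g a real Lie algebra. For every alternating 1-linear map A from V to g, the identity [A ∧ [A ∧ A]] = 0 holds as an equality of alternating 3-linear maps from V to g, with index types identified along the canonical equivalences. -/
open scoped TensorProduct

open Equiv

lemma swap_mk_bijective (l : ℕ) :
    Function.Bijective (fun i : Fin 1 ⊕ Fin l =>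
      (Quotient.mk'' (Equiv.swap (Sum.inl 0) i) : Equiv.Perm.ModSumCongr (Fin 1) (Fin l))) := by
  constructor
  · intro i j h
    rw [Quotient.eq''] at h
    obtain ⟨p, hp⟩ := QuotientGroup.leftRel_apply.mp h
    have h0 := congrArg (fun e => e (Sum.inl 0)) hp
    simp only [Equiv.Perm.sumCongrHom_apply, Equiv.Perm.mul_apply, Equiv.swap_inv,
      Equiv.sumCongr_apply, Sum.map_inl] at h0
    rw [Equiv.swap_apply_left, Fin.eq_zero (p.1 0)] at h0
    by_cases hj : j = Sum.inl 0
    · subst hj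
      rw [Equiv.swap_apply_left] at h0
      exact h0.symm
    · by_cases hji : j = i
      · exact hji.symm
      · rw [Equiv.swap_apply_of_ne_of_ne hj hji] at h0
        exact absurd h0.symm hj
  · intro q
    induction q using Quotient.inductionOn' with
    | h σ =>
      refine ⟨σ (Sum.inl 0), ?_⟩
      rw [Quotient.eq'']
      refine QuotientGroup.leftRel_apply.mpr ?_
      apply Equiv.Perm.mem_sumCongrHom_range_of_perm_mapsTo_inl
      rintro x ⟨y, rfl⟩
      have hy : y = 0 := Fin.eq_zero y
      subst hy
      refine ⟨0, ?_⟩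
      simp [Equiv.Perm.mul_apply, Equiv.swap_inv]

lemma bwedge_apply {V g : Type*} [AddCommGroup V] [Module ℝ V]
    [LieRing g] [LieAlgebra ℝ g] {l : ℕ}
    (u : AlternatingMap ℝ V g (Fin 1)) (v : AlternatingMap ℝ V g (Fin l))
    (w : Fin (1 + l) → V) :
    bwedge u v w = ∑ i : Fin 1 ⊕ Fin l,
      (Equiv.Perm.sign (Equiv.swap (Sum.inl 0) i) : ℤ) •
        ⁅u fun j => w (finSumFinEquiv (Equiv.swap (Sum.inl 0) i (Sum.inl j))),
         v fun j => w (finSumFinEquiv (Equiv.swap (Sum.inl 0) i (Sum.inr j)))⁆ := by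
  rw [bwedge]
  rw [AlternatingMap.domDomCongr_apply, LinearMap.compAlternatingMap_apply]
  have : (u.domCoprod v) (w ∘ ⇑finSumFinEquiv) =
      ∑ σ : Equiv.Perm.ModSumCongr (Fin 1) (Fin l),
        AlternatingMap.domCoprod.summand u v σ (w ∘ ⇑finSumFinEquiv) := by
    rw [AlternatingMap.domCoprod_apply]
    rw [MultilinearMap.sum_apply]
  rw [this, map_sum]
  refine Eq.trans (@Fintype.sum_bijective (Fin 1 ⊕ Fin l) (Equiv.Perm.ModSumCongr (Fin 1) (Fin l)) g
    _ (QuotientGroup.fintype _) _ _ (swap_mk_bijective l) _ _ fun _ => rfl).symm ?_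
  refine Finset.sum_congr rfl fun i _ => ?_
  rw [AlternatingMap.domCoprod.summand_mk'']
  simp only [MultilinearMap.smul_apply, MultilinearMap.domDomCongr_apply,
    MultilinearMap.domCoprod_apply, Units.smul_def, map_zsmul, TensorProduct.lift.tmul]
  rw [MultilinearMap.smul_apply, map_zsmul]
  rfl

@[simp] lemma inl_fin_one {β : Type*} (j : Fin 1) : (Sum.inl j : Fin 1 ⊕ β) = Sum.inl 0 := by
  rw [Fin.eq_zero j]

@[simp] lemma sign_swap_inl_inr {l : ℕ} (x : Fin l) :
    Equiv.Perm.sign (Equiv.swap (Sum.inl 0 : Fin 1 ⊕ Fin l) (Sum.inr x)) = -1 :=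
  Equiv.Perm.sign_swap (by simp)

/-- The identity `[A ∧ [A ∧ A]] = 0` for a `g`-valued 1-form `A`, with index types
identified with `Fin 3` along the canonical equivalences. This is the algebraic core
of the Bianchi identity `d_A F_A = 0`. -/
theorem bwedge_triple_self {V g : Type*} [AddCommGroup V] [Module ℝ V]
    [FiniteDimensional ℝ V] [LieRing g] [LieAlgebra ℝ g]
    (A : AlternatingMap ℝ V g (Fin 1)) :
    (bwedge A (bwedge A A)).domDomCongr
      (finCongr (by omega : 1 + (1 + 1) = 3)) = 0 := by
  ext w
  rw [AlternatingMap.domDomCongr_apply, AlternatingMap.zero_apply]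
  simp only [bwedge_apply]
  simp only [Fintype.sum_sum_type, Finset.univ_unique, Fin.default_eq_zero, Fin.isValue,
    Finset.sum_singleton, Fin.sum_univ_succ, Fin.sum_univ_zero, add_zero, inl_fin_one,
    Equiv.swap_self, Equiv.refl_apply, Equiv.Perm.sign_refl, sign_swap_inl_inr,
    Equiv.swap_apply_left, Equiv.swap_apply_right, one_smul, neg_smul, Units.val_one,
    Units.val_neg, Function.comp_apply, finCongr_apply, finSumFinEquiv_apply_left,
    finSumFinEquiv_apply_right, Fin.eq_zero]
  simp only [Equiv.swap_apply_def]
  simp (config := { decide := true }) only [reduceIte, Fin.isValue]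
  open Fin.NatCast in
  have hw : ∀ (x : Fin (1 + (1 + 1))) (h : 1 + (1 + 1) = 3),
      w (Fin.cast h x) = w (((x : ℕ) : Fin 3)) := by
    intro x h
    congr 1
    rw [Fin.ext_iff, Fin.coe_cast, Fin.val_cast_of_lt (by omega : (x : ℕ) < 3)]
  simp only [hw, finSumFinEquiv_apply_left, finSumFinEquiv_apply_right, Fin.coe_castAdd, Fin.coe_natAdd, Fin.val_succ, Fin.val_zero]
  norm_num
  set a := A fun _ : Fin 1 => w 0 with ha
  set b := A fun _ : Fin 1 => w 1 with hb
  set c := A fun _ : Fin 1 => w 2 with hc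
  have hcb : ⁅c, b⁆ = -⁅b, c⁆ := (lie_skew c b).symm
  have h1 : ⁅a, ⁅c, b⁆⁆ = -⁅a, ⁅b, c⁆⁆ := by rw [hcb, lie_neg]
  have hab : ⁅c, ⁅a, b⁆⁆ = -⁅⁅a, b⁆, c⁆ := (lie_skew c ⁅a, b⁆).symm
  have h2 : ⁅c, ⁅a, b⁆⁆ = ⁅b, ⁅a, c⁆⁆ - ⁅a, ⁅b, c⁆⁆ := by
    rw [hab, lie_lie]
    abel
  rw [h1, h2]
  abel
end

section
/- Let V be a finite-dimensional real vector space, g a real Lie algebra, and k, l natural numbers. For every alternating 1-linear map A, alternating k-linear map u, and alternating l-linear map v from V to g, the Leibniz-type identity [A ∧ [u ∧ v]] = [[A ∧ u] ∧ v] + (−1)^k [u ∧ [A ∧ v]] holds as an equality of alternating (1+k+l)-linear maps from V to g, with all index types identified along the canonical equivalences. -/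
open scoped TensorProduct

open Equiv


section Aux

variable {V : Type*} [AddCommGroup V] [Module ℝ V]

theorem nsmul_cancel {M : Type*} [AddCommGroup M] [Module ℝ M] {n : ℕ} (hn : n ≠ 0)
    {x y : M} (h : n • x = n • y) : x = y := by
  rw [← Nat.cast_smul_eq_nsmul ℝ, ← Nat.cast_smul_eq_nsmul ℝ] at h
  have hn' : ((n : ℝ)) ≠ 0 := by exact_mod_cast hn
  have := congrArg (fun z => (n : ℝ)⁻¹ • z) h
  simpa [smul_smul, inv_mul_cancel₀ hn'] using this

theorem alternatization_domDomCongr_s11 {ι κ : Type*} [Fintype ι] [DecidableEq ι]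
    [Fintype κ] [DecidableEq κ] (e : ι ≃ κ) {W : Type*} [AddCommGroup W] [Module ℝ W]
    (m : MultilinearMap ℝ (fun _ : ι => V) W) :
    MultilinearMap.alternatization (m.domDomCongr e) =
      (MultilinearMap.alternatization m).domDomCongr e := by
  ext x
  rw [MultilinearMap.alternatization_apply, AlternatingMap.domDomCongr_apply,
    MultilinearMap.alternatization_apply]
  refine (Fintype.sum_equiv e.permCongr _ _ fun τ => ?_).symm
  simp only [MultilinearMap.domDomCongr_apply, Equiv.Perm.sign_permCongr,
    Equiv.permCongr_apply, Equiv.symm_apply_apply, Function.comp]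

theorem multilinear_domCoprod_domDomCongr {ι₁ ι₂ κ₁ κ₂ : Type*}
    (e₁ : ι₁ ≃ κ₁) (e₂ : ι₂ ≃ κ₂) {N₁ N₂ : Type*} [AddCommGroup N₁] [Module ℝ N₁]
    [AddCommGroup N₂] [Module ℝ N₂]
    (a : MultilinearMap ℝ (fun _ : ι₁ => V) N₁) (b : MultilinearMap ℝ (fun _ : ι₂ => V) N₂) :
    MultilinearMap.domCoprod (a.domDomCongr e₁) (b.domDomCongr e₂) =
      (MultilinearMap.domCoprod a b).domDomCongr (e₁.sumCongr e₂) := by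
  ext x
  simp [MultilinearMap.domCoprod_apply, Function.comp]
  rfl

theorem alt_domCoprod_domDomCongr {ι₁ ι₂ κ₁ κ₂ : Type*} [Fintype ι₁] [DecidableEq ι₁]
    [Fintype ι₂] [DecidableEq ι₂] [Fintype κ₁] [DecidableEq κ₁] [Fintype κ₂] [DecidableEq κ₂]
    (e₁ : ι₁ ≃ κ₁) (e₂ : ι₂ ≃ κ₂) {N₁ N₂ : Type*} [AddCommGroup N₁] [Module ℝ N₁]
    [AddCommGroup N₂] [Module ℝ N₂]
    (a : AlternatingMap ℝ V N₁ ι₁) (b : AlternatingMap ℝ V N₂ ι₂) :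
    (a.domDomCongr e₁).domCoprod (b.domDomCongr e₂) =
      (a.domCoprod b).domDomCongr (e₁.sumCongr e₂) := by
  have hc₁ : Fintype.card κ₁ = Fintype.card ι₁ := (Fintype.card_congr e₁).symm
  have hc₂ : Fintype.card κ₂ = Fintype.card ι₂ := (Fintype.card_congr e₂).symm
  refine nsmul_cancel (n := (Fintype.card ι₁).factorial * (Fintype.card ι₂).factorial)
    (by positivity) ?_
  have h1 := MultilinearMap.domCoprod_alternization_eq (a.domDomCongr e₁) (b.domDomCongr e₂)
  rw [hc₁, hc₂] at h1
  rw [← h1, AlternatingMap.coe_domDomCongr, AlternatingMap.coe_domDomCongr,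
    multilinear_domCoprod_domDomCongr, alternatization_domDomCongr_s11,
    MultilinearMap.domCoprod_alternization_eq, AlternatingMap.domDomCongr_smul]

end Aux
section Aux

variable {V g : Type*} [AddCommGroup V] [Module ℝ V] [LieRing g] [LieAlgebra ℝ g]

/-- Unreindexed bracket-wedge, on the sum index type. -/
noncomputable def bwA {ι₁ ι₂ : Type*} [Fintype ι₁] [DecidableEq ι₁]
    [Fintype ι₂] [DecidableEq ι₂]
    (a : AlternatingMap ℝ V g ι₁) (b : AlternatingMap ℝ V g ι₂) :
    AlternatingMap ℝ V g (ι₁ ⊕ ι₂) :=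
  (TensorProduct.lift (bracketBilin g)).compAlternatingMap (a.domCoprod b)

theorem domCoprod_nsmul_left {ι₁ ι₂ : Type*} [Fintype ι₁] [DecidableEq ι₁]
    [Fintype ι₂] [DecidableEq ι₂] {N₁ N₂ : Type*} [AddCommGroup N₁] [Module ℝ N₁]
    [AddCommGroup N₂] [Module ℝ N₂] (n : ℕ)
    (a : AlternatingMap ℝ V N₁ ι₁) (b : AlternatingMap ℝ V N₂ ι₂) :
    (n • a).domCoprod b = n • (a.domCoprod b) := by
  rw [← AlternatingMap.domCoprod'_apply, ← AlternatingMap.domCoprod'_apply,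
    ← TensorProduct.smul_tmul', map_nsmul]

theorem domCoprod_nsmul_right {ι₁ ι₂ : Type*} [Fintype ι₁] [DecidableEq ι₁]
    [Fintype ι₂] [DecidableEq ι₂] {N₁ N₂ : Type*} [AddCommGroup N₁] [Module ℝ N₁]
    [AddCommGroup N₂] [Module ℝ N₂] (n : ℕ)
    (a : AlternatingMap ℝ V N₁ ι₁) (b : AlternatingMap ℝ V N₂ ι₂) :
    a.domCoprod (n • b) = n • (a.domCoprod b) := by
  rw [← AlternatingMap.domCoprod'_apply, ← AlternatingMap.domCoprod'_apply,
    TensorProduct.tmul_smul, map_nsmul]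

theorem bwA_scaled {ι₁ ι₂ : Type*} [Fintype ι₁] [DecidableEq ι₁]
    [Fintype ι₂] [DecidableEq ι₂]
    (a : AlternatingMap ℝ V g ι₁) (b : AlternatingMap ℝ V g ι₂) :
    MultilinearMap.alternatization
        ((TensorProduct.lift (bracketBilin g)).compMultilinearMap
          (MultilinearMap.domCoprod ↑a ↑b)) =
      ((Fintype.card ι₁).factorial * (Fintype.card ι₂).factorial) • bwA a b := by
  rw [LinearMap.compMultilinearMap_alternatization, MultilinearMap.domCoprod_alternization_eq,
    LinearMap.compAlternatingMap_smul]
  rfl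

end Aux
theorem bwA_core {V g : Type*} [AddCommGroup V] [Module ℝ V] [LieRing g] [LieAlgebra ℝ g]
    {ι₀ ι₁ ι₂ : Type*} [Fintype ι₀] [DecidableEq ι₀] [Fintype ι₁] [DecidableEq ι₁]
    [Fintype ι₂] [DecidableEq ι₂]
    (a : AlternatingMap ℝ V g ι₀) (u : AlternatingMap ℝ V g ι₁)
    (v : AlternatingMap ℝ V g ι₂) :
    bwA a (bwA u v) =
      (bwA (bwA a u) v).domDomCongr (Equiv.sumAssoc ι₀ ι₁ ι₂) +
        (bwA u (bwA a v)).domDomCongr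
          (((Equiv.sumAssoc ι₁ ι₀ ι₂).symm.trans
            ((Equiv.sumComm ι₁ ι₀).sumCongr (Equiv.refl ι₂))).trans
              (Equiv.sumAssoc ι₀ ι₁ ι₂)) := by
  set F := TensorProduct.lift (bracketBilin g) with hF
  set eSw := ((Equiv.sumAssoc ι₁ ι₀ ι₂).symm.trans
      ((Equiv.sumComm ι₁ ι₀).sumCongr (Equiv.refl ι₂))).trans (Equiv.sumAssoc ι₀ ι₁ ι₂) with heSw
  have key : F.compMultilinearMap
        (MultilinearMap.domCoprod a.toMultilinearMap (F.compMultilinearMap (MultilinearMap.domCoprod u.toMultilinearMap v.toMultilinearMap)))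
      = (F.compMultilinearMap (MultilinearMap.domCoprod
            (F.compMultilinearMap (MultilinearMap.domCoprod a.toMultilinearMap u.toMultilinearMap)) v.toMultilinearMap)).domDomCongr
          (Equiv.sumAssoc ι₀ ι₁ ι₂)
        + (F.compMultilinearMap (MultilinearMap.domCoprod u.toMultilinearMap
            (F.compMultilinearMap (MultilinearMap.domCoprod a.toMultilinearMap v.toMultilinearMap)))).domDomCongr eSw := by
    ext x
    simp only [LinearMap.compMultilinearMap_apply, MultilinearMap.domCoprod_apply,
      MultilinearMap.domDomCongr_apply, MultilinearMap.add_apply, hF, heSw,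
      TensorProduct.lift.tmul, bracketBilin, LinearMap.mk₂_apply,
      Equiv.trans_apply, Equiv.sumAssoc_apply_inl_inl, Equiv.sumAssoc_apply_inl_inr,
      Equiv.sumAssoc_apply_inr, Equiv.sumCongr_apply, Equiv.sumComm_apply,
      AlternatingMap.coe_multilinearMap, Sum.map_inl, Sum.map_inr, Sum.swap_inl, Sum.swap_inr,
      Equiv.symm_apply_apply, Equiv.sumAssoc_symm_apply_inl, Equiv.sumAssoc_symm_apply_inr_inl,
      Equiv.sumAssoc_symm_apply_inr_inr, Equiv.coe_refl, id_eq]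
    exact leibniz_lie _ _ _
  have h := congrArg (fun m : MultilinearMap ℝ (fun _ : ι₀ ⊕ (ι₁ ⊕ ι₂) => V) g =>
    MultilinearMap.alternatization m) key
  simp only [map_add] at h
  set n₀ := (Fintype.card ι₀).factorial
  set n₁ := (Fintype.card ι₁).factorial
  set n₂ := (Fintype.card ι₂).factorial
  have hL : MultilinearMap.alternatization (F.compMultilinearMap
      (MultilinearMap.domCoprod a.toMultilinearMap (F.compMultilinearMap (MultilinearMap.domCoprod u.toMultilinearMap v.toMultilinearMap))))
      = (n₀ * (n₁ * n₂)) • bwA a (bwA u v) := by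
    rw [LinearMap.compMultilinearMap_alternatization, MultilinearMap.domCoprod_alternization,
      AlternatingMap.coe_alternatization, bwA_scaled, domCoprod_nsmul_left,
      domCoprod_nsmul_right, LinearMap.compAlternatingMap_smul, LinearMap.compAlternatingMap_smul,
      smul_smul]
    rfl
  have hR1 : MultilinearMap.alternatization ((F.compMultilinearMap (MultilinearMap.domCoprod
      (F.compMultilinearMap (MultilinearMap.domCoprod a.toMultilinearMap u.toMultilinearMap)) v.toMultilinearMap)).domDomCongr
        (Equiv.sumAssoc ι₀ ι₁ ι₂))
      = (n₀ * (n₁ * n₂)) • (bwA (bwA a u) v).domDomCongr (Equiv.sumAssoc ι₀ ι₁ ι₂) := by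
    rw [alternatization_domDomCongr_s11, LinearMap.compMultilinearMap_alternatization,
      MultilinearMap.domCoprod_alternization, AlternatingMap.coe_alternatization, bwA_scaled,
      domCoprod_nsmul_left, domCoprod_nsmul_right, LinearMap.compAlternatingMap_smul,
      LinearMap.compAlternatingMap_smul, smul_smul, AlternatingMap.domDomCongr_smul]
    congr 1
    simp only [n₀, n₁, n₂]; ring
  have hR2 : MultilinearMap.alternatization ((F.compMultilinearMap (MultilinearMap.domCoprod u.toMultilinearMap
      (F.compMultilinearMap (MultilinearMap.domCoprod a.toMultilinearMap v.toMultilinearMap)))).domDomCongr eSw)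
      = (n₀ * (n₁ * n₂)) • (bwA u (bwA a v)).domDomCongr eSw := by
    rw [alternatization_domDomCongr_s11, LinearMap.compMultilinearMap_alternatization,
      MultilinearMap.domCoprod_alternization, AlternatingMap.coe_alternatization, bwA_scaled,
      domCoprod_nsmul_left, domCoprod_nsmul_right, LinearMap.compAlternatingMap_smul,
      LinearMap.compAlternatingMap_smul, smul_smul, AlternatingMap.domDomCongr_smul]
    congr 1
    simp only [n₀, n₁, n₂]; ring
  rw [hL, hR1, hR2, ← smul_add] at h
  exact nsmul_cancel (by positivity) h

theorem compAlt_domDomCongr {V N N₂ : Type*} [AddCommGroup V] [Module ℝ V]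
    [AddCommGroup N] [Module ℝ N] [AddCommGroup N₂] [Module ℝ N₂]
    {ι κ : Type*} (F : N →ₗ[ℝ] N₂) (w : AlternatingMap ℝ V N ι) (e : ι ≃ κ) :
    F.compAlternatingMap (w.domDomCongr e) = (F.compAlternatingMap w).domDomCongr e := rfl

theorem bwA_congr_right {V g : Type*} [AddCommGroup V] [Module ℝ V] [LieRing g]
    [LieAlgebra ℝ g] {ι₀ ι₂ κ₂ : Type*} [Fintype ι₀] [DecidableEq ι₀] [Fintype ι₂]
    [DecidableEq ι₂] [Fintype κ₂] [DecidableEq κ₂]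
    (a : AlternatingMap ℝ V g ι₀) (b : AlternatingMap ℝ V g ι₂) (e : ι₂ ≃ κ₂) :
    bwA a (b.domDomCongr e) = (bwA a b).domDomCongr ((Equiv.refl ι₀).sumCongr e) := by
  have h := alt_domCoprod_domDomCongr (Equiv.refl ι₀) e a b
  rw [AlternatingMap.domDomCongr_refl] at h
  unfold bwA
  rw [h, compAlt_domDomCongr]

theorem bwA_congr_left {V g : Type*} [AddCommGroup V] [Module ℝ V] [LieRing g]
    [LieAlgebra ℝ g] {ι₀ κ₀ ι₂ : Type*} [Fintype ι₀] [DecidableEq ι₀] [Fintype κ₀]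
    [DecidableEq κ₀] [Fintype ι₂] [DecidableEq ι₂]
    (a : AlternatingMap ℝ V g ι₀) (b : AlternatingMap ℝ V g ι₂) (e : ι₀ ≃ κ₀) :
    bwA (a.domDomCongr e) b = (bwA a b).domDomCongr (e.sumCongr (Equiv.refl ι₂)) := by
  have h := alt_domCoprod_domDomCongr e (Equiv.refl ι₂) a b
  rw [AlternatingMap.domDomCongr_refl] at h
  unfold bwA
  rw [h, compAlt_domDomCongr]

theorem equivEq1 (k l : ℕ) :
    (Equiv.sumAssoc (Fin 1) (Fin k) (Fin l)).trans
      (((((Equiv.refl (Fin 1)).sumCongr finSumFinEquiv).trans finSumFinEquiv)).trans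
        (finCongr (Nat.add_assoc 1 k l).symm))
    = (finSumFinEquiv.sumCongr (Equiv.refl (Fin l))).trans
        (finSumFinEquiv : Fin (1 + k) ⊕ Fin l ≃ Fin (1 + k + l)) := by
  apply Equiv.ext; intro x
  rcases x with x | j
  · rcases x with o | j <;>
      (apply Fin.ext;
       simp [Fin.ext_iff, Equiv.sumCongr_apply, Fin.coe_castAdd, Fin.coe_natAdd])
  · apply Fin.ext
    simp [Fin.ext_iff, Equiv.sumCongr_apply, Fin.coe_castAdd, Fin.coe_natAdd]
    omega

theorem equivEq2 (k l : ℕ) :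
    ((((Equiv.sumAssoc (Fin k) (Fin 1) (Fin l)).symm.trans
        ((Equiv.sumComm (Fin k) (Fin 1)).sumCongr (Equiv.refl (Fin l)))).trans
          (Equiv.sumAssoc (Fin 1) (Fin k) (Fin l)))).trans
      (((((Equiv.refl (Fin 1)).sumCongr finSumFinEquiv).trans finSumFinEquiv)).trans
        (finCongr (Nat.add_assoc 1 k l).symm))
    = ((((Equiv.refl (Fin k)).sumCongr finSumFinEquiv).trans
          (finSumFinEquiv : Fin k ⊕ Fin (1 + l) ≃ Fin (k + (1 + l)))).trans
        (finCongr ((Nat.add_left_comm k 1 l).trans (Nat.add_assoc 1 k l).symm))).trans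
      ((finCongr (by omega : k + l + 1 = 1 + k + l)).permCongr
        (Fin.cycleRange (⟨k, by omega⟩ : Fin (k + l + 1)))) := by
  apply Equiv.ext; intro x
  have simplemmas : True := trivial
  rcases x with j | x
  · apply Fin.ext
    simp only [Equiv.trans_apply, Equiv.sumCongr_apply, Equiv.sumComm_apply,
      Equiv.sumAssoc_apply_inl_inr, Equiv.sumAssoc_apply_inl_inl, Equiv.sumAssoc_apply_inr,
      Equiv.sumAssoc_symm_apply_inl, Sum.map_inl, Sum.map_inr, Sum.swap_inl, Sum.swap_inr,
      Equiv.refl_apply, finSumFinEquiv_apply_left, finSumFinEquiv_apply_right,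
      finCongr_apply, Equiv.permCongr_apply, finCongr_symm, Fin.coe_cast,
      Fin.coe_castAdd, Fin.coe_natAdd]
    rw [Fin.coe_cycleRange_of_lt
      (by rw [Fin.lt_def]; simp only [Fin.coe_cast, Fin.coe_castAdd]; omega)]
    simp only [Fin.coe_cast, Fin.coe_castAdd]
    omega
  · rcases x with o | j
    · have ho : (o : ℕ) = 0 := by omega
      apply Fin.ext
      simp only [Equiv.trans_apply, Equiv.sumCongr_apply, Equiv.sumComm_apply,
        Equiv.sumAssoc_apply_inl_inr, Equiv.sumAssoc_apply_inl_inl, Equiv.sumAssoc_apply_inr,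
        Equiv.sumAssoc_symm_apply_inr_inl, Sum.map_inl, Sum.map_inr, Sum.swap_inl, Sum.swap_inr,
        Equiv.refl_apply, finSumFinEquiv_apply_left, finSumFinEquiv_apply_right,
        finCongr_apply, Equiv.permCongr_apply, finCongr_symm, Fin.coe_cast,
        Fin.coe_castAdd, Fin.coe_natAdd]
      rw [show (Fin.cast (by omega : 1 + k + l = k + l + 1)
          (Fin.cast ((Nat.add_left_comm k 1 l).trans (Nat.add_assoc 1 k l).symm)
            (Fin.natAdd k (Fin.castAdd l o))))
          = (⟨k, by omega⟩ : Fin (k + l + 1)) from by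
        apply Fin.ext
        simp only [Fin.coe_cast, Fin.coe_natAdd, Fin.coe_castAdd]
        omega]
      rw [Fin.cycleRange_self]
      simp only [Fin.val_zero]; exact ho
    · apply Fin.ext
      simp only [Equiv.trans_apply, Equiv.sumCongr_apply, Equiv.sumComm_apply,
        Equiv.sumAssoc_apply_inl_inr, Equiv.sumAssoc_apply_inl_inl, Equiv.sumAssoc_apply_inr,
        Equiv.sumAssoc_symm_apply_inr_inr, Sum.map_inl, Sum.map_inr, Sum.swap_inl, Sum.swap_inr,
        Equiv.refl_apply, finSumFinEquiv_apply_left, finSumFinEquiv_apply_right,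
        finCongr_apply, Equiv.permCongr_apply, finCongr_symm, Fin.coe_cast,
        Fin.coe_castAdd, Fin.coe_natAdd]
      rw [Fin.cycleRange_of_gt
        (by rw [Fin.lt_def]; simp only [Fin.coe_cast, Fin.coe_natAdd, Fin.coe_castAdd]; omega)]
      simp only [Fin.coe_cast, Fin.coe_natAdd, Fin.coe_castAdd]
      omega

theorem equivEq1' (k l : ℕ) :
    (Equiv.sumAssoc (Fin 1) (Fin k) (Fin l)).trans
      (((Equiv.refl (Fin 1)).sumCongr finSumFinEquiv).trans
        (finSumFinEquiv.trans (finCongr (Nat.add_assoc 1 k l).symm)))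
    = (finSumFinEquiv.sumCongr (Equiv.refl (Fin l))).trans
        (finSumFinEquiv : Fin (1 + k) ⊕ Fin l ≃ Fin (1 + k + l)) := by
  simpa only [Equiv.trans_assoc] using equivEq1 k l

theorem equivEq2' (k l : ℕ) :
    (Equiv.sumAssoc (Fin k) (Fin 1) (Fin l)).symm.trans
      (((Equiv.sumComm (Fin k) (Fin 1)).sumCongr (Equiv.refl (Fin l))).trans
        ((finSumFinEquiv.sumCongr (Equiv.refl (Fin l))).trans
          (finSumFinEquiv : Fin (1 + k) ⊕ Fin l ≃ Fin (1 + k + l))))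
    = (((Equiv.refl (Fin k)).sumCongr finSumFinEquiv).trans
        ((finSumFinEquiv : Fin k ⊕ Fin (1 + l) ≃ Fin (k + (1 + l))).trans
          (finCongr ((Nat.add_left_comm k 1 l).trans (Nat.add_assoc 1 k l).symm)))).trans
      ((finCongr (by omega : k + l + 1 = 1 + k + l)).permCongr
        (Fin.cycleRange (⟨k, by omega⟩ : Fin (k + l + 1)))) := by
  rw [← equivEq1' k l]
  have h := equivEq2 k l
  simp only [Equiv.trans_assoc] at h ⊢
  exact h

theorem sign_pi (k l : ℕ) :
    Equiv.Perm.sign ((finCongr (by omega : k + l + 1 = 1 + k + l)).permCongr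
      (Fin.cycleRange (⟨k, by omega⟩ : Fin (k + l + 1)))) = (-1) ^ k := by
  rw [Equiv.Perm.sign_permCongr, Fin.sign_cycleRange]

theorem units_pow_neg_one_smul {M : Type*} [AddCommGroup M] [Module ℝ M] (n : ℕ) (x : M) :
    ((-1 : ℤˣ) ^ n) • x = ((-1 : ℝ) ^ n) • x := by
  rcases Nat.even_or_odd n with h | h
  · rw [h.neg_one_pow, h.neg_one_pow, one_smul, one_smul]
  · rw [h.neg_one_pow, h.neg_one_pow]
    simp [Units.smul_def]

theorem domDomCongr_trans_perm {V N : Type*} [AddCommGroup V] [Module ℝ V]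
    [AddCommGroup N] [Module ℝ N] {ι κ : Type*} [Fintype κ] [DecidableEq κ]
    (w : AlternatingMap ℝ V N ι) (e : ι ≃ κ) (π : Equiv.Perm κ) :
    w.domDomCongr (e.trans π) = Equiv.Perm.sign π • w.domDomCongr e := by
  rw [AlternatingMap.domDomCongr_trans, AlternatingMap.domDomCongr_perm]


/-- The Leibniz-type identity
`[A ∧ [u ∧ v]] = [[A ∧ u] ∧ v] + (-1)^k [u ∧ [A ∧ v]]` for a `g`-valued 1-form `A`,
`k`-form `u`, and `l`-form `v`, with all index types identified with `Fin (1 + k + l)`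
along the canonical equivalences. -/
theorem bwedge_leibniz {V g : Type*} [AddCommGroup V] [Module ℝ V]
    [FiniteDimensional ℝ V] [LieRing g] [LieAlgebra ℝ g] {k l : ℕ}
    (A : AlternatingMap ℝ V g (Fin 1)) (u : AlternatingMap ℝ V g (Fin k))
    (v : AlternatingMap ℝ V g (Fin l)) :
    (bwedge A (bwedge u v)).domDomCongr
        (finCongr (by omega : 1 + (k + l) = 1 + k + l)) =
      bwedge (bwedge A u) v +
        ((-1 : ℝ) ^ k) • ((bwedge u (bwedge A v)).domDomCongr
          (finCongr (by omega : k + (1 + l) = 1 + k + l))) := by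
  rw [show bwedge A (bwedge u v)
        = (bwA A ((bwA u v).domDomCongr finSumFinEquiv)).domDomCongr finSumFinEquiv from rfl,
    show bwedge (bwedge A u) v
        = (bwA ((bwA A u).domDomCongr finSumFinEquiv) v).domDomCongr finSumFinEquiv from rfl,
    show bwedge u (bwedge A v)
        = (bwA u ((bwA A v).domDomCongr finSumFinEquiv)).domDomCongr finSumFinEquiv from rfl,
    bwA_congr_right A (bwA u v) finSumFinEquiv,
    bwA_congr_left (bwA A u) v finSumFinEquiv,
    bwA_congr_right u (bwA A v) finSumFinEquiv,
    bwA_core A u v]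
  simp only [AlternatingMap.domDomCongr_add, ← AlternatingMap.domDomCongr_trans,
    Equiv.trans_assoc]
  rw [equivEq1' k l, equivEq2' k l, domDomCongr_trans_perm, sign_pi,
    units_pow_neg_one_smul]
end
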